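/- Let G be a finite tree with maximum degree Δ, let m ≥ 1, and set K = ⌈Δ/m⌉ + 1. If there exists a vertex i such that K > max({⌈deg(i)/m⌉} ∪ {⌊deg(j)/m⌋ : j ∈ N(i)}) + 1, then there exists a conflict-free, m-collision-free multi-coloring of G using at most K distinct colors in total in which the vertex i receives at least two colors. -/

import Mathlib

namespace Stmt6

variable {V : Type*} (G : SimpleGraph V)
variable (hT : G.IsTree) (r : V)

noncomputable def ptr (v : V) : G.Walk v r :=
  (hT.existsUnique_path v r).choose

lemma ptr_isPath (v : V) : (ptr G hT r v).IsPath :=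
  (hT.existsUnique_path v r).choose_spec.1

lemma ptr_unique {v : V} (p : G.Walk v r) (hp : p.IsPath) : p = ptr G hT r v :=
  (hT.existsUnique_path v r).choose_spec.2 p hp

lemma ptr_self : ptr G hT r r = SimpleGraph.Walk.nil :=
  (ptr_unique G hT r _ SimpleGraph.Walk.IsPath.nil).symm

noncomputable def depth (v : V) : ℕ := (ptr G hT r v).length

noncomputable def parent (v : V) : V := (ptr G hT r v).getVert 1

lemma ptr_not_nil {v : V} (hv : v ≠ r) : ¬ (ptr G hT r v).Nil :=
  SimpleGraph.Walk.not_nil_of_ne hv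

lemma parent_adj {v : V} (hv : v ≠ r) : G.Adj v (parent G hT r v) :=
  (ptr G hT r v).adj_snd (ptr_not_nil G hT r hv)

lemma ptr_tail {v : V} (hv : v ≠ r) :
    (ptr G hT r v).tail = ptr G hT r (parent G hT r v) :=
  ptr_unique G hT r _ ((ptr_isPath G hT r v).tail)

lemma depth_parent_add_one {v : V} (hv : v ≠ r) :
    depth G hT r (parent G hT r v) + 1 = depth G hT r v := by
  rw [depth, ← ptr_tail G hT r hv]
  exact SimpleGraph.Walk.length_tail_add_one (ptr_not_nil G hT r hv)

lemma parent_self : parent G hT r r = r := by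
  rw [parent, ptr_self]; rfl

lemma depth_self : depth G hT r r = 0 := by
  rw [depth, ptr_self]; rfl

end Stmt6

namespace Stmt6
set_option linter.unusedSectionVars false
variable {V : Type*} (G : SimpleGraph V)
variable (hT : G.IsTree) (r : V)

variable [DecidableEq V] in
lemma parent_or {u v : V} (huv : G.Adj u v) :
    parent G hT r u = v ∨ parent G hT r v = u := by
  by_cases h : v ∈ (ptr G hT r u).support
  · left
    have hq : ((ptr G hT r u).takeUntil v h).IsPath :=
      (ptr_isPath G hT r u).takeUntil h
    have hedge : (SimpleGraph.Walk.cons huv SimpleGraph.Walk.nil).IsPath := by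
      refine SimpleGraph.Walk.IsPath.nil.cons ?_
      simp [huv.ne]
    have hqe : (ptr G hT r u).takeUntil v h = SimpleGraph.Walk.cons huv SimpleGraph.Walk.nil :=
      (hT.existsUnique_path u v).unique hq hedge
    have hspec := (ptr G hT r u).take_spec h
    rw [hqe] at hspec
    rw [parent, ← hspec]
    simp [SimpleGraph.Walk.getVert_cons_succ]
  · right
    have hp : (SimpleGraph.Walk.cons huv.symm (ptr G hT r u)).IsPath :=
      (ptr_isPath G hT r u).cons h
    have := ptr_unique G hT r _ hp
    rw [parent, ← this]
    simp [SimpleGraph.Walk.getVert_cons_succ]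

end Stmt6

namespace Stmt6
set_option linter.unusedSectionVars false
variable {V : Type*} [Fintype V] [DecidableEq V] (G : SimpleGraph V) [DecidableRel G.Adj]
variable (hT : G.IsTree) (r : V)

noncomputable def children (p : V) : Finset V :=
  (G.neighborFinset p).filter (fun u => parent G hT r u = p)

lemma mem_children {p u : V} :
    u ∈ children G hT r p ↔ G.Adj p u ∧ parent G hT r u = p := by
  simp [children, SimpleGraph.mem_neighborFinset]

lemma child_ne_root {p u : V} (hu : u ∈ children G hT r p) : u ≠ r := by
  rintro rfl
  rw [mem_children] at hu
  rw [parent_self] at hu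
  exact G.irrefl (hu.2 ▸ hu.1)

lemma mem_children_self {v : V} (hv : v ≠ r) :
    v ∈ children G hT r (parent G hT r v) :=
  (mem_children G hT r).2 ⟨(parent_adj G hT r hv).symm, rfl⟩

lemma parent_not_mem_children {v : V} (hv : v ≠ r) :
    parent G hT r v ∉ children G hT r v := by
  intro h
  rw [mem_children] at h
  by_cases hp : parent G hT r v = r
  · rw [hp, parent_self] at h
    exact hv h.2.symm
  · have h1 := depth_parent_add_one G hT r hv
    have h2 := depth_parent_add_one G hT r hp
    rw [h.2] at h2
    omega

lemma neighborFinset_root :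
    G.neighborFinset r = children G hT r r := by
  ext u
  simp only [SimpleGraph.mem_neighborFinset, mem_children]
  constructor
  · intro h
    refine ⟨h, ?_⟩
    rcases parent_or G hT r h.symm with h' | h'
    · exact h'
    · rw [parent_self] at h'
      exact absurd (h' ▸ h) (G.irrefl)
  · exact fun h => h.1

lemma neighborFinset_eq {v : V} (hv : v ≠ r) :
    G.neighborFinset v = insert (parent G hT r v) (children G hT r v) := by
  ext u
  simp only [SimpleGraph.mem_neighborFinset, Finset.mem_insert, mem_children]
  constructor
  · intro h
    rcases parent_or G hT r h.symm with h' | h'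
    · exact Or.inr ⟨h, h'⟩
    · exact Or.inl h'.symm
  · rintro (rfl | h)
    · exact parent_adj G hT r hv
    · exact h.1

lemma card_children_root : (children G hT r r).card = G.degree r := by
  rw [← neighborFinset_root]; rfl

lemma card_children {v : V} (hv : v ≠ r) :
    (children G hT r v).card + 1 = G.degree v := by
  have := neighborFinset_eq G hT r hv
  rw [SimpleGraph.degree, this, Finset.card_insert_of_notMem (parent_not_mem_children G hT r hv)]

end Stmt6

namespace Stmt6
set_option linter.unusedSectionVars false
variable {V : Type*} [Fintype V] [DecidableEq V] (G : SimpleGraph V) [DecidableRel G.Adj]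
variable (hT : G.IsTree) (r : V)

noncomputable def rank (v : V) : ℕ :=
  ((children G hT r (parent G hT r v)).filter
    (fun u => (Fintype.equivFin V u : ℕ) < Fintype.equivFin V v)).card

lemma rank_lt_card {v : V} (hv : v ≠ r) :
    rank G hT r v < (children G hT r (parent G hT r v)).card := by
  have hm := mem_children_self G hT r hv
  apply Finset.card_lt_card
  constructor
  · exact Finset.filter_subset _ _
  · intro hsub
    have := hsub hm
    simp at this

lemma rank_strictMono {p u v : V} (hu : u ∈ children G hT r p) (hv : v ∈ children G hT r p)
    (huv : (Fintype.equivFin V u : ℕ) < Fintype.equivFin V v) :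
    rank G hT r u < rank G hT r v := by
  have hpu : parent G hT r u = p := ((mem_children G hT r).1 hu).2
  have hpv : parent G hT r v = p := ((mem_children G hT r).1 hv).2
  have hsub : insert u ((children G hT r p).filter
      (fun w => (Fintype.equivFin V w : ℕ) < Fintype.equivFin V u)) ⊆
      (children G hT r p).filter (fun w => (Fintype.equivFin V w : ℕ) < Fintype.equivFin V v) := by
    intro w hw
    rcases Finset.mem_insert.1 hw with rfl | hw
    · exact Finset.mem_filter.2 ⟨hu, huv⟩
    · rcases Finset.mem_filter.1 hw with ⟨h1, h2⟩
      exact Finset.mem_filter.2 ⟨h1, h2.trans huv⟩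
  calc rank G hT r u < rank G hT r u + 1 := Nat.lt_succ_self _
    _ = (insert u ((children G hT r p).filter
        (fun w => (Fintype.equivFin V w : ℕ) < Fintype.equivFin V u))).card := by
        rw [Finset.card_insert_of_notMem (by simp), rank, hpu]
    _ ≤ ((children G hT r p).filter
        (fun w => (Fintype.equivFin V w : ℕ) < Fintype.equivFin V v)).card :=
        Finset.card_le_card hsub
    _ = rank G hT r v := by rw [rank, hpv]

lemma rank_injOn {p u v : V} (hu : u ∈ children G hT r p) (hv : v ∈ children G hT r p)
    (h : rank G hT r u = rank G hT r v) : u = v := by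
  rcases lt_trichotomy ((Fintype.equivFin V u : ℕ)) ((Fintype.equivFin V v : ℕ)) with hlt | heq | hgt
  · exact absurd h (Nat.ne_of_lt (rank_strictMono G hT r hu hv hlt))
  · exact (Fintype.equivFin V).injective (Fin.ext heq)
  · exact absurd h.symm (Nat.ne_of_lt (rank_strictMono G hT r hv hu hgt))

end Stmt6

namespace Stmt6

def availList (K m : ℕ) (C Gp : Finset ℕ) : List ℕ :=
  (List.range K).flatMap fun c =>
    if c ∈ C then [] else List.replicate (m - if c ∈ Gp then 1 else 0) c

lemma list_range_sum {n : ℕ} (f : ℕ → ℕ) :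
    ((List.range n).map f).sum = ∑ i ∈ Finset.range n, f i := rfl

lemma mem_avail {K m : ℕ} {C Gp : Finset ℕ} {x : ℕ} (hx : x ∈ availList K m C Gp) :
    x < K ∧ x ∉ C := by
  rw [availList, List.mem_flatMap] at hx
  obtain ⟨a, ha, hx⟩ := hx
  by_cases hC : a ∈ C
  · simp [hC] at hx
  · rw [if_neg hC, List.mem_replicate] at hx
    rw [hx.2]
    exact ⟨List.mem_range.1 ha, hC⟩

lemma count_avail {K m : ℕ} {C Gp : Finset ℕ} (c : ℕ) :
    (availList K m C Gp).count c ≤ m - (if c ∈ Gp then 1 else 0) := by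
  rw [availList, List.count_flatMap, list_range_sum]
  by_cases hc : c ∈ Finset.range K
  · rw [Finset.sum_eq_single_of_mem c hc]
    · by_cases hC : c ∈ C
      · simp [hC]
      · simp [hC, List.count_replicate]
    · intro i _ hne
      simp only [Function.comp]
      by_cases hC : i ∈ C
      · simp [hC]
      · simp [hC, List.count_replicate, hne]
  · rw [Finset.sum_eq_zero]
    · exact Nat.zero_le _
    · intro i hi
      have hne : i ≠ c := fun h => hc (h ▸ hi)
      simp only [Function.comp]
      by_cases hC : i ∈ C
      · simp [hC]
      · simp [hC, List.count_replicate, hne]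

lemma length_avail {K m : ℕ} {C Gp : Finset ℕ} (hm : 1 ≤ m) :
    m * K ≤ (availList K m C Gp).length + m * C.card + Gp.card := by
  rw [availList, List.length_flatMap, list_range_sum]
  have key : ∀ i ∈ Finset.range K,
      m ≤ (List.length ∘ fun c =>
          if c ∈ C then ([] : List ℕ) else List.replicate (m - if c ∈ Gp then 1 else 0) c) i
        + ((if i ∈ C then m else 0) + (if i ∈ Gp then 1 else 0)) := by
    intro i _
    simp only [Function.comp]
    by_cases hC : i ∈ C <;> by_cases hG : i ∈ Gp <;> simp [hC, hG] <;> omega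
  calc m * K = ∑ _i ∈ Finset.range K, m := by simp [mul_comm]
    _ ≤ ∑ i ∈ Finset.range K, ((List.length ∘ fun c =>
          if c ∈ C then ([] : List ℕ) else List.replicate (m - if c ∈ Gp then 1 else 0) c) i
        + ((if i ∈ C then m else 0) + (if i ∈ Gp then 1 else 0))) := Finset.sum_le_sum key
    _ = (∑ i ∈ Finset.range K, (List.length ∘ fun c =>
          if c ∈ C then ([] : List ℕ) else List.replicate (m - if c ∈ Gp then 1 else 0) c) i)
        + ((∑ i ∈ Finset.range K, if i ∈ C then m else 0)
          + (∑ i ∈ Finset.range K, if i ∈ Gp then 1 else 0)) := by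
        rw [Finset.sum_add_distrib, Finset.sum_add_distrib]
    _ ≤ _ := by
        have hC1 : ((Finset.range K).filter (· ∈ C)).card ≤ C.card :=
          Finset.card_le_card fun x hx => (Finset.mem_filter.1 hx).2
        have hG1 : ((Finset.range K).filter (· ∈ Gp)).card ≤ Gp.card :=
          Finset.card_le_card fun x hx => (Finset.mem_filter.1 hx).2
        have hC2 : (∑ i ∈ Finset.range K, if i ∈ C then m else 0) ≤ m * C.card := by
          rw [← Finset.sum_filter, Finset.sum_const, smul_eq_mul, mul_comm]
          exact Nat.mul_le_mul_left m hC1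
        have hG2 : (∑ i ∈ Finset.range K, if i ∈ Gp then 1 else 0) ≤ Gp.card := by
          rw [← Finset.sum_filter, Finset.sum_const, smul_eq_mul, mul_one]
          exact hG1
        simp only [Function.comp_apply] at *
        omega

end Stmt6

namespace Stmt6

noncomputable def col {V : Type*} [Fintype V] [DecidableEq V] (G : SimpleGraph V)
    [DecidableRel G.Adj] (hT : G.IsTree) (r : V)
    (K m : ℕ) (v : V) : ℕ :=
  if hv : v = r then 0
  else
    (availList K m
      (if parent G hT r v = r then {0, 1} else {col G hT r K m (parent G hT r v)})
      (if hp : parent G hT r v = r then ∅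
       else if parent G hT r (parent G hT r v) = r then {0, 1}
       else {col G hT r K m (parent G hT r (parent G hT r v))})).getD (rank G hT r v) 0
termination_by depth G hT r v
decreasing_by
  all_goals first
    | (have h1 := depth_parent_add_one G hT r hv
       have h2 := depth_parent_add_one G hT r hp
       omega)
    | (have := depth_parent_add_one G hT r hv
       omega)

end Stmt6

namespace Stmt6
set_option linter.unusedSectionVars false
variable {V : Type*} [Fintype V] [DecidableEq V] (G : SimpleGraph V) [DecidableRel G.Adj]
variable (hT : G.IsTree) (r : V) (K m : ℕ)

noncomputable def colors (v : V) : Finset ℕ :=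
  if v = r then {0, 1} else {col G hT r K m v}

noncomputable def gpSet (p : V) : Finset ℕ :=
  if p = r then ∅ else colors G hT r K m (parent G hT r p)

lemma col_spec {v : V} (hv : v ≠ r) :
    col G hT r K m v =
      (availList K m (colors G hT r K m (parent G hT r v))
        (gpSet G hT r K m (parent G hT r v))).getD (rank G hT r v) 0 := by
  rw [col, dif_neg hv]
  by_cases hp : parent G hT r v = r
  · simp [hp, colors, gpSet]
  · by_cases hpp : parent G hT r (parent G hT r v) = r
    · simp [hp, hpp, colors, gpSet]
    · simp [hp, hpp, colors, gpSet]

variable (Hcap : ∀ p : V, (children G hT r p).card ≤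
    (availList K m (colors G hT r K m p) (gpSet G hT r K m p)).length)
include Hcap

lemma col_mem {v : V} (hv : v ≠ r) :
    col G hT r K m v ∈ availList K m (colors G hT r K m (parent G hT r v))
      (gpSet G hT r K m (parent G hT r v)) := by
  rw [col_spec G hT r K m hv]
  have h1 : rank G hT r v <
      (availList K m (colors G hT r K m (parent G hT r v))
        (gpSet G hT r K m (parent G hT r v))).length :=
    lt_of_lt_of_le (rank_lt_card G hT r hv) (Hcap (parent G hT r v))
  rw [List.getD_eq_getElem _ _ h1]
  exact List.getElem_mem h1

lemma col_lt {v : V} (hv : v ≠ r) : col G hT r K m v < K :=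
  (mem_avail (col_mem G hT r K m Hcap hv)).1

lemma col_not_mem {v : V} (hv : v ≠ r) :
    col G hT r K m v ∉ colors G hT r K m (parent G hT r v) :=
  (mem_avail (col_mem G hT r K m Hcap hv)).2

lemma conflict_free {u w : V} (huw : G.Adj u w) :
    colors G hT r K m u ∩ colors G hT r K m w = ∅ := by
  have key : ∀ a b : V, G.Adj a b → parent G hT r a = b →
      colors G hT r K m a ∩ colors G hT r K m b = ∅ := by
    intro a b hab hpab
    have ha : a ≠ r := by
      rintro rfl
      rw [parent_self] at hpab
      exact G.irrefl (hpab ▸ hab)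
    apply Finset.eq_empty_of_forall_notMem
    intro x hx
    rw [Finset.mem_inter] at hx
    have hxa : x = col G hT r K m a := by
      have : colors G hT r K m a = {col G hT r K m a} := if_neg ha
      rw [this] at hx
      exact Finset.mem_singleton.1 hx.1
    subst hxa
    exact col_not_mem G hT r K m Hcap ha (hpab ▸ hx.2)
  rcases parent_or G hT r huw with h | h
  · exact key u w huw h
  · rw [Finset.inter_comm]
    exact key w u huw.symm h

end Stmt6

namespace Stmt6

lemma count_ge_card_filter (c : ℕ) (l : List ℕ) (t : Finset ℕ)
    (ht : ∀ i ∈ t, i < l.length ∧ l.getD i 0 = c) : t.card ≤ l.count c := by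
  induction l using List.reverseRecOn generalizing t with
  | nil =>
    have : t = ∅ := Finset.eq_empty_of_forall_notMem fun i hi => by
      have := (ht i hi).1; simp at this
    simp [this]
  | append_singleton l a ih =>
    have hlen : (l ++ [a]).length = l.length + 1 := by simp
    have hgetl : ∀ i < l.length, (l ++ [a]).getD i 0 = l.getD i 0 := by
      intro i hi
      rw [List.getD_eq_getElem _ _ (by simp; omega), List.getD_eq_getElem _ _ hi]
      exact List.getElem_append_left hi
    have hgeta : (l ++ [a]).getD l.length 0 = a := by
      rw [List.getD_eq_getElem _ _ (by simp)]
      simp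
    set t' := t.filter (· < l.length) with ht'
    have hcount' : t'.card ≤ l.count c := by
      apply ih
      intro i hi
      rw [ht', Finset.mem_filter] at hi
      exact ⟨hi.2, by rw [← hgetl i hi.2]; exact (ht i hi.1).2⟩
    have hca : List.count c (l ++ [a]) = l.count c + if a = c then 1 else 0 := by
      simp [List.count_append, List.count_singleton]
    by_cases hmem : a = c
    · have hsub : t ⊆ insert l.length t' := by
        intro i hi
        have h1 := (ht i hi).1
        rw [hlen] at h1
        rcases Nat.lt_or_ge i l.length with h | h
        · exact Finset.mem_insert.2 (Or.inr (Finset.mem_filter.2 ⟨hi, h⟩))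
        · have : i = l.length := by omega
          exact Finset.mem_insert.2 (Or.inl this)
      calc t.card ≤ (insert l.length t').card := Finset.card_le_card hsub
        _ ≤ t'.card + 1 := Finset.card_insert_le _ _
        _ ≤ l.count c + 1 := by omega
        _ = List.count c (l ++ [a]) := by rw [hca, if_pos hmem]
    · have hsub : t ⊆ t' := by
        intro i hi
        have h1 := (ht i hi).1
        rw [hlen] at h1
        rcases Nat.lt_or_ge i l.length with h | h
        · exact Finset.mem_filter.2 ⟨hi, h⟩
        · have : i = l.length := by omega
          subst this
          exact absurd ((ht _ hi).2.symm.trans hgeta).symm hmem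
      calc t.card ≤ t'.card := Finset.card_le_card hsub
        _ ≤ l.count c := hcount'
        _ ≤ List.count c (l ++ [a]) := by rw [hca]; omega

lemma card_le_count {α : Type*} [DecidableEq α] (s : Finset α) (f : α → ℕ) (l : List ℕ) (c : ℕ)
    (hinj : ∀ a ∈ s, ∀ b ∈ s, f a = f b → a = b)
    (hlt : ∀ a ∈ s, f a < l.length)
    (hval : ∀ a ∈ s, l.getD (f a) 0 = c) : s.card ≤ l.count c := by
  rw [← Finset.card_image_of_injOn (fun a ha b hb h => hinj a ha b hb h)]
  apply count_ge_card_filter c l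
  intro i hi
  rw [Finset.mem_image] at hi
  obtain ⟨a, ha, rfl⟩ := hi
  exact ⟨hlt a ha, hval a ha⟩

end Stmt6

namespace Stmt6
set_option linter.unusedSectionVars false
variable {V : Type*} [Fintype V] [DecidableEq V] (G : SimpleGraph V) [DecidableRel G.Adj]
variable (hT : G.IsTree) (r : V) (K m : ℕ)
variable (Hcap : ∀ p : V, (children G hT r p).card ≤
    (availList K m (colors G hT r K m p) (gpSet G hT r K m p)).length)
include Hcap

lemma children_count (u : V) (c : ℕ) (hm : 1 ≤ m) :
    ((children G hT r u).filter (fun w => c ∈ colors G hT r K m w)).card ≤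
      (availList K m (colors G hT r K m u) (gpSet G hT r K m u)).count c := by
  apply card_le_count _ (rank G hT r)
  · intro a ha b hb hab
    exact rank_injOn G hT r (Finset.mem_of_mem_filter a ha) (Finset.mem_of_mem_filter b hb) hab
  · intro a ha
    have haa := Finset.mem_of_mem_filter a ha
    have hpa : parent G hT r a = u := ((mem_children G hT r).1 haa).2
    calc rank G hT r a < (children G hT r u).card := by
          have := rank_lt_card G hT r (child_ne_root G hT r haa)
          rwa [hpa] at this
      _ ≤ _ := Hcap u
  · intro a ha
    have haa := Finset.mem_of_mem_filter a ha
    have hne : a ≠ r := child_ne_root G hT r haa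
    have hpa : parent G hT r a = u := ((mem_children G hT r).1 haa).2
    have hc : c ∈ colors G hT r K m a := (Finset.mem_filter.1 ha).2
    have hcol : colors G hT r K m a = {col G hT r K m a} := if_neg hne
    rw [hcol, Finset.mem_singleton] at hc
    rw [hc, ← hpa]
    exact (col_spec G hT r K m hne).symm

lemma collision_free (u : V) (c : ℕ) (hm : 1 ≤ m) :
    ((G.neighborFinset u).filter (fun w => c ∈ colors G hT r K m w)).card ≤ m := by
  have hcc := children_count G hT r K m Hcap u c hm
  have hca := count_avail (K := K) (m := m) (C := colors G hT r K m u)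
    (Gp := gpSet G hT r K m u) c
  by_cases hu : u = r
  · subst hu
    rw [neighborFinset_root G hT u]
    omega
  · rw [neighborFinset_eq G hT r hu, Finset.filter_insert]
    have hgp : gpSet G hT r K m u = colors G hT r K m (parent G hT r u) := if_neg hu
    by_cases hcp : c ∈ colors G hT r K m (parent G hT r u)
    · rw [if_pos hcp]
      have hc1 : (if c ∈ gpSet G hT r K m u then 1 else 0) = 1 := by
        rw [hgp, if_pos hcp]
      rw [hc1] at hca
      calc (insert (parent G hT r u) ((children G hT r u).filter
            (fun w => c ∈ colors G hT r K m w))).card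
          ≤ ((children G hT r u).filter (fun w => c ∈ colors G hT r K m w)).card + 1 :=
            Finset.card_insert_le _ _
        _ ≤ m := by omega
    · rw [if_neg hcp]
      omega

end Stmt6

namespace Stmt6
set_option linter.unusedSectionVars false
variable {V : Type*} [Fintype V] [DecidableEq V] (G : SimpleGraph V) [DecidableRel G.Adj]
variable (hT : G.IsTree) (r : V) (K m : ℕ)
variable (Hcap : ∀ p : V, (children G hT r p).card ≤
    (availList K m (colors G hT r K m p) (gpSet G hT r K m p)).length)
include Hcap

lemma colors_subset_range (HK2 : 2 ≤ K) (v : V) :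
    colors G hT r K m v ⊆ Finset.range K := by
  by_cases hv : v = r
  · rw [colors, if_pos hv]
    intro x hx
    rcases Finset.mem_insert.1 hx with rfl | hx
    · exact Finset.mem_range.2 (by omega)
    · rw [Finset.mem_singleton] at hx
      subst hx
      exact Finset.mem_range.2 (by omega)
  · rw [colors, if_neg hv]
    intro x hx
    rw [Finset.mem_singleton] at hx
    subst hx
    exact Finset.mem_range.2 (col_lt G hT r K m Hcap hv)

lemma total_card (HK2 : 2 ≤ K) :
    (Finset.univ.biUnion (colors G hT r K m)).card ≤ K := by
  calc (Finset.univ.biUnion (colors G hT r K m)).card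
      ≤ (Finset.range K).card := by
        apply Finset.card_le_card
        intro x hx
        rw [Finset.mem_biUnion] at hx
        obtain ⟨v, _, hv⟩ := hx
        exact colors_subset_range G hT r K m Hcap HK2 v hv
    _ = K := Finset.card_range K

end Stmt6


open Stmt6

/-- "if" direction: For a finite tree with maximum degree Δ, m ≥ 1
and K = ⌈Δ/m⌉ + 1, if a vertex i satisfies
K > max({⌈deg(i)/m⌉} ∪ {⌊deg(j)/m⌋ : j ∈ N(i)}) + 1, then there is a
conflict-free, m-collision-free multi-coloring using at most K colors in total
in which vertex i receives at least two colors.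
(For naturals with m ≥ 1, ⌈d/m⌉ = (d + m - 1) / m and ⌊d/m⌋ = d / m.) -/
theorem stmt_6 {V : Type*} [Fintype V] [DecidableEq V] (G : SimpleGraph V)
    [DecidableRel G.Adj] (hT : G.IsTree) (m : ℕ) (hm : 1 ≤ m)
    (K : ℕ) (hK : K = (G.maxDegree + m - 1) / m + 1)
    (i : V)
    (hi : ((insert ((G.degree i + m - 1) / m)
            ((G.neighborFinset i).image (fun j => G.degree j / m))).max'
          (Finset.insert_nonempty _ _)) + 1 < K) :
    ∃ colors : V → Finset ℕ,
      (∀ u, (colors u).Nonempty) ∧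
      (∀ u w, G.Adj u w → colors u ∩ colors w = ∅) ∧
      (∀ u c, ((G.neighborFinset u).filter (fun w => c ∈ colors w)).card ≤ m) ∧
      (Finset.univ.biUnion colors).card ≤ K ∧
      2 ≤ (colors i).card := by
  -- numeric facts
  have hq1 : (G.degree i + m - 1) / m + 2 ≤ K := by
    have h1 := Finset.le_max' (insert ((G.degree i + m - 1) / m)
      ((G.neighborFinset i).image (fun j => G.degree j / m))) _
      (Finset.mem_insert_self _ _)
    omega
  have hq2 : ∀ j ∈ G.neighborFinset i, G.degree j / m + 2 ≤ K := by
    intro j hj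
    have h1 := Finset.le_max' (insert ((G.degree i + m - 1) / m)
      ((G.neighborFinset i).image (fun j => G.degree j / m))) (G.degree j / m)
      (Finset.mem_insert.2 (Or.inr (Finset.mem_image_of_mem _ hj)))
    omega
  have HK2 : 2 ≤ K := by omega
  have e1 : m * K = m * (K - 2) + 2 * m := by
    have : K - 2 + 2 = K := by omega
    calc m * K = m * ((K - 2) + 2) := by rw [this]
      _ = m * (K - 2) + 2 * m := by ring
  have hA : G.degree i + 2 * m ≤ m * K := by
    have hdm := Nat.div_add_mod (G.degree i + m - 1) m
    have hmod : (G.degree i + m - 1) % m < m := Nat.mod_lt _ (by omega)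
    have hmul : m * ((G.degree i + m - 1) / m) ≤ m * (K - 2) :=
      Nat.mul_le_mul_left m (by omega)
    omega
  have hB : ∀ j ∈ G.neighborFinset i, G.degree j + m + 1 ≤ m * K := by
    intro j hj
    have hj2 := hq2 j hj
    have hdm := Nat.div_add_mod (G.degree j) m
    have hmod : G.degree j % m < m := Nat.mod_lt _ (by omega)
    have hmul : m * (G.degree j / m) ≤ m * (K - 2) :=
      Nat.mul_le_mul_left m (by omega)
    omega
  have hC : ∀ v : V, G.degree v + m ≤ m * K := by
    intro v
    have hdm := Nat.div_add_mod (G.maxDegree + m - 1) m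
    have hmod : (G.maxDegree + m - 1) % m < m := Nat.mod_lt _ (by omega)
    have hdeg := G.degree_le_maxDegree v
    have e2 : m * K = m * ((G.maxDegree + m - 1) / m) + m := by
      calc m * K = m * ((G.maxDegree + m - 1) / m + 1) := by rw [hK]
        _ = m * ((G.maxDegree + m - 1) / m) + m := by ring
    omega
  -- capacity
  have Hcap : ∀ p : V, (children G hT i p).card ≤
      (availList K m (colors G hT i K m p) (gpSet G hT i K m p)).length := by
    intro p
    by_cases hp : p = i
    · subst hp
      have hlen := length_avail (K := K) (m := m) (C := colors G hT p K m p)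
        (Gp := gpSet G hT p K m p) hm
      have hc1 : colors G hT p K m p = {0, 1} := if_pos rfl
      have hc2 : gpSet G hT p K m p = ∅ := if_pos rfl
      rw [hc1, hc2] at hlen
      have hcard : (({0, 1} : Finset ℕ)).card = 2 := rfl
      rw [hcard] at hlen
      simp only [Finset.card_empty] at hlen
      rw [card_children_root G hT p, hc1, hc2]
      have := hA
      omega
    · have hlen := length_avail (K := K) (m := m) (C := colors G hT i K m p)
        (Gp := gpSet G hT i K m p) hm
      have hc1 : colors G hT i K m p = {col G hT i K m p} := if_neg hp
      have hcc := card_children G hT i hp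
      by_cases hpp : parent G hT i p = i
      · have hc2 : gpSet G hT i K m p = {0, 1} := by
          rw [gpSet, if_neg hp, hpp, colors, if_pos rfl]
        rw [hc1, hc2] at hlen
        have hcard : (({0, 1} : Finset ℕ)).card = 2 := rfl
        rw [hcard, Finset.card_singleton] at hlen
        have hmem : p ∈ G.neighborFinset i := by
          rw [SimpleGraph.mem_neighborFinset]
          exact (hpp ▸ parent_adj G hT i hp).symm
        have := hB p hmem
        rw [hc1, hc2]
        omega
      · have hc2 : gpSet G hT i K m p = {col G hT i K m (parent G hT i p)} := by
          rw [gpSet, if_neg hp, colors, if_neg hpp]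
        rw [hc1, hc2] at hlen
        rw [Finset.card_singleton, Finset.card_singleton] at hlen
        have := hC p
        rw [hc1, hc2]
        omega
  refine ⟨colors G hT i K m, ?_, ?_, ?_, ?_, ?_⟩
  · intro u
    by_cases hu : u = i
    · rw [colors, if_pos hu]
      exact ⟨0, Finset.mem_insert_self _ _⟩
    · rw [colors, if_neg hu]
      exact Finset.singleton_nonempty _
  · intro u w huw
    exact conflict_free G hT i K m Hcap huw
  · intro u c
    exact collision_free G hT i K m Hcap u c hm
  · exact total_card G hT i K m Hcap HK2
  · rw [colors, if_pos rfl]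
    have : (({0, 1} : Finset ℕ)).card = 2 := rfl
    omega
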